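/- For the explicit 8×8 matrix γ of Example 1, one has rank(γ + σ γ⁻¹ σ) = 4 and the column spaces of γ + σ γ⁻¹ σ and γ + σ̃ γ⁻¹ σ̃ intersect trivially, i.e., ran(γ + σγ⁻¹σ) ∩ ran(γ + σ̃γ⁻¹σ̃) = {0}. -/
import Mathlib


open Matrix

/-- The symplectic form of four modes. -/
def sympForm4 : Matrix (Fin 8) (Fin 8) ℝ :=
  !![0,1,0,0,0,0,0,0; -1,0,0,0,0,0,0,0;
     0,0,0,1,0,0,0,0; 0,0,-1,0,0,0,0,0;
     0,0,0,0,0,1,0,0; 0,0,0,0,-1,0,0,0;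
     0,0,0,0,0,0,0,1; 0,0,0,0,0,0,-1,0]

/-- The partially transposed symplectic form `σ̃ = (−σ_A) ⊕ σ_B`. -/
def sympFormPT4 : Matrix (Fin 8) (Fin 8) ℝ :=
  !![0,-1,0,0,0,0,0,0; 1,0,0,0,0,0,0,0;
     0,0,0,-1,0,0,0,0; 0,0,1,0,0,0,0,0;
     0,0,0,0,0,1,0,0; 0,0,0,0,-1,0,0,0;
     0,0,0,0,0,0,0,1; 0,0,0,0,0,0,-1,0]

/-- The Werner–Wolf bound entangled covariance matrix (Example 1). -/
def gammaWW : Matrix (Fin 8) (Fin 8) ℝ :=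
  !![2,0,0,0,1,0,0,0; 0,1,0,0,0,0,0,-1;
     0,0,2,0,0,0,-1,0; 0,0,0,1,0,-1,0,0;
     1,0,0,0,2,0,0,0; 0,0,0,-1,0,4,0,0;
     0,0,-1,0,0,0,2,0; 0,-1,0,0,0,0,0,4]

/-- `rank(γ + σγ⁻¹σ) = 4` and the column spaces of `γ + σγ⁻¹σ` and `γ + σ̃γ⁻¹σ̃`
intersect trivially; i.e. `γ` is a minimal PPT covariance matrix. -/

noncomputable def giM : Matrix (Fin 8) (Fin 8) ℝ :=
  !![2/3, 0, 0, 0, -1/3, 0, 0, 0;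
     0, 4/3, 0, 0, 0, 0, 0, 1/3;
     0, 0, 2/3, 0, 0, 0, 1/3, 0;
     0, 0, 0, 4/3, 0, 1/3, 0, 0;
     -1/3, 0, 0, 0, 2/3, 0, 0, 0;
     0, 0, 0, 1/3, 0, 1/3, 0, 0;
     0, 0, 1/3, 0, 0, 0, 2/3, 0;
     0, 1/3, 0, 0, 0, 0, 0, 1/3]

noncomputable def MM : Matrix (Fin 8) (Fin 8) ℝ :=
  !![2/3, 0, 0, 0, 1, 0, -1/3, 0;
     0, 1/3, 0, 0, 0, 1/3, 0, -1;
     0, 0, 2/3, 0, -1/3, 0, -1, 0;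
     0, 0, 0, 1/3, 0, -1, 0, -1/3;
     1, 0, -1/3, 0, 5/3, 0, 0, 0;
     0, 1/3, 0, -1, 0, 10/3, 0, 0;
     -1/3, 0, -1, 0, 0, 0, 5/3, 0;
     0, -1, 0, -1/3, 0, 0, 0, 10/3]

noncomputable def NN : Matrix (Fin 8) (Fin 8) ℝ :=
  !![2/3, 0, 0, 0, 1, 0, 1/3, 0;
     0, 1/3, 0, 0, 0, -1/3, 0, -1;
     0, 0, 2/3, 0, 1/3, 0, -1, 0;
     0, 0, 0, 1/3, 0, -1, 0, 1/3;
     1, 0, 1/3, 0, 5/3, 0, 0, 0;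
     0, -1/3, 0, -1, 0, 10/3, 0, 0;
     1/3, 0, -1, 0, 0, 0, 5/3, 0;
     0, -1, 0, 1/3, 0, 0, 0, 10/3]

def CC : Matrix (Fin 8) (Fin 4) ℝ :=
  !![2, 0, 0, 0;
     0, 1, 0, 0;
     0, 0, 2, 0;
     0, 0, 0, 1;
     3, 0, -1, 0;
     0, 1, 0, -3;
     -1, 0, -3, 0;
     0, -3, 0, -1]

noncomputable def RRf : Matrix (Fin 4) (Fin 8) ℝ :=
  !![1/3, 0, 0, 0, 1/2, 0, -1/6, 0;
     0, 1/3, 0, 0, 0, 1/3, 0, -1;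
     0, 0, 1/3, 0, -1/6, 0, -1/2, 0;
     0, 0, 0, 1/3, 0, -1, 0, -1/3]

def P0 : Matrix (Fin 4) (Fin 8) ℝ :=
  !![1,0,0,0,0,0,0,0; 0,1,0,0,0,0,0,0; 0,0,1,0,0,0,0,0; 0,0,0,1,0,0,0,0]

def Q0 : Matrix (Fin 8) (Fin 4) ℝ :=
  !![1,0,0,0; 0,1,0,0; 0,0,1,0; 0,0,0,1; 0,0,0,0; 0,0,0,0; 0,0,0,0; 0,0,0,0]

noncomputable def DD : Matrix (Fin 4) (Fin 4) ℝ :=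
  !![2/3,0,0,0; 0,1/3,0,0; 0,0,2/3,0; 0,0,0,1/3]

noncomputable def DDi : Matrix (Fin 4) (Fin 4) ℝ :=
  !![3/2,0,0,0; 0,3,0,0; 0,0,3/2,0; 0,0,0,3]

def PP : Matrix (Fin 8) (Fin 8) ℝ :=
  !![10, 0, 0, 0, -6, 0, 2, 0;
     0, 10, 0, 0, 0, -1, 0, 3;
     0, 0, 10, 0, 2, 0, 6, 0;
     0, 0, 0, 10, 0, 3, 0, 1;
     -6, 0, 2, 0, 4, 0, 0, 0;
     0, -1, 0, 3, 0, 1, 0, 0;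
     2, 0, 6, 0, 0, 0, 4, 0;
     0, 3, 0, 1, 0, 0, 0, 1]

def QQ : Matrix (Fin 8) (Fin 8) ℝ :=
  !![10, 0, 0, 0, -6, 0, -2, 0;
     0, 10, 0, 0, 0, 1, 0, 3;
     0, 0, 10, 0, -2, 0, 6, 0;
     0, 0, 0, 10, 0, 3, 0, -1;
     -6, 0, -2, 0, 4, 0, 0, 0;
     0, 1, 0, 3, 0, 1, 0, 0;
     -2, 0, 6, 0, 0, 0, 4, 0;
     0, 3, 0, -1, 0, 0, 0, 1]

noncomputable def RRm : Matrix (Fin 8) (Fin 8) ℝ :=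
  !![1/2, 0, 0, 0, 3/4, 0, 0, 0;
     0, 1/2, 0, 0, 0, 0, 0, -3/2;
     0, 0, 1/2, 0, 0, 0, -3/4, 0;
     0, 0, 0, 1/2, 0, -3/2, 0, 0;
     3/4, 0, 0, 0, 5/4, 0, 0, 0;
     0, 0, 0, -3/2, 0, 5, 0, 0;
     0, 0, -3/4, 0, 0, 0, 5/4, 0;
     0, -3/2, 0, 0, 0, 0, 0, 5]

set_option maxHeartbeats 2000000 in
lemma hinv : gammaWW * giM = 1 := by
  rw [← Matrix.ext_iff]
  simp only [gammaWW, giM, Matrix.mul_apply, Fin.sum_univ_succ, Fin.forall_fin_succ,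
    Matrix.one_apply, Matrix.cons_val_zero, Matrix.cons_val_succ, Matrix.cons_val',
    Matrix.empty_val', Matrix.cons_val_fin_one, Matrix.of_apply, Fin.succ_zero_eq_one,
    Finset.univ_unique, Finset.sum_singleton, Fin.val_zero, Fin.val_succ]
  norm_num [Fin.ext_iff, Fin.val_succ]

set_option maxHeartbeats 2000000 in
lemma hMM : gammaWW + sympForm4 * giM * sympForm4 = MM := by
  rw [← Matrix.ext_iff]
  simp only [gammaWW, giM, sympForm4, MM, Matrix.mul_apply, Matrix.add_apply,
    Fin.sum_univ_succ, Fin.forall_fin_succ,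
    Matrix.cons_val_zero, Matrix.cons_val_succ, Matrix.cons_val',
    Matrix.empty_val', Matrix.cons_val_fin_one, Matrix.of_apply, Fin.succ_zero_eq_one,
    Finset.univ_unique, Finset.sum_singleton]
  norm_num

set_option maxHeartbeats 2000000 in
lemma hNN : gammaWW + sympFormPT4 * giM * sympFormPT4 = NN := by
  rw [← Matrix.ext_iff]
  simp only [gammaWW, giM, sympFormPT4, NN, Matrix.mul_apply, Matrix.add_apply,
    Fin.sum_univ_succ, Fin.forall_fin_succ,
    Matrix.cons_val_zero, Matrix.cons_val_succ, Matrix.cons_val',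
    Matrix.empty_val', Matrix.cons_val_fin_one, Matrix.of_apply, Fin.succ_zero_eq_one,
    Finset.univ_unique, Finset.sum_singleton]
  norm_num

set_option maxHeartbeats 2000000 in
lemma hfact : MM = CC * RRf := by
  rw [← Matrix.ext_iff]
  simp only [MM, CC, RRf, Matrix.mul_apply, Fin.sum_univ_succ, Fin.forall_fin_succ,
    Matrix.cons_val_zero, Matrix.cons_val_succ, Matrix.cons_val',
    Matrix.empty_val', Matrix.cons_val_fin_one, Matrix.of_apply, Fin.succ_zero_eq_one,
    Finset.univ_unique, Finset.sum_singleton]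
  norm_num

set_option maxHeartbeats 2000000 in
lemma hsub : P0 * MM * Q0 = DD := by
  rw [← Matrix.ext_iff]
  simp only [P0, MM, Q0, DD, Matrix.mul_apply, Fin.sum_univ_succ, Fin.forall_fin_succ,
    Matrix.cons_val_zero, Matrix.cons_val_succ, Matrix.cons_val',
    Matrix.empty_val', Matrix.cons_val_fin_one, Matrix.of_apply, Fin.succ_zero_eq_one,
    Finset.univ_unique, Finset.sum_singleton]
  norm_num

set_option maxHeartbeats 2000000 in
lemma hDD : DD * DDi = 1 := by
  rw [← Matrix.ext_iff]
  simp only [DD, DDi, Matrix.mul_apply, Fin.sum_univ_succ, Fin.forall_fin_succ,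
    Matrix.one_apply, Matrix.cons_val_zero, Matrix.cons_val_succ, Matrix.cons_val',
    Matrix.empty_val', Matrix.cons_val_fin_one, Matrix.of_apply, Fin.succ_zero_eq_one,
    Finset.univ_unique, Finset.sum_singleton]
  norm_num [Fin.ext_iff, Fin.val_succ]

set_option maxHeartbeats 2000000 in
lemma hPM : PP * MM = 0 := by
  rw [← Matrix.ext_iff]
  simp only [PP, MM, Matrix.mul_apply, Fin.sum_univ_succ, Fin.forall_fin_succ,
    Matrix.zero_apply, Matrix.cons_val_zero, Matrix.cons_val_succ, Matrix.cons_val',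
    Matrix.empty_val', Matrix.cons_val_fin_one, Matrix.of_apply, Fin.succ_zero_eq_one,
    Finset.univ_unique, Finset.sum_singleton]
  norm_num

set_option maxHeartbeats 2000000 in
lemma hQN : QQ * NN = 0 := by
  rw [← Matrix.ext_iff]
  simp only [QQ, NN, Matrix.mul_apply, Fin.sum_univ_succ, Fin.forall_fin_succ,
    Matrix.zero_apply, Matrix.cons_val_zero, Matrix.cons_val_succ, Matrix.cons_val',
    Matrix.empty_val', Matrix.cons_val_fin_one, Matrix.of_apply, Fin.succ_zero_eq_one,
    Finset.univ_unique, Finset.sum_singleton]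
  norm_num

set_option maxHeartbeats 2000000 in
lemma hRPQ : RRm * (PP + QQ) = 1 := by
  rw [← Matrix.ext_iff]
  simp only [RRm, PP, QQ, Matrix.mul_apply, Matrix.add_apply, Fin.sum_univ_succ,
    Fin.forall_fin_succ,
    Matrix.one_apply, Matrix.cons_val_zero, Matrix.cons_val_succ, Matrix.cons_val',
    Matrix.empty_val', Matrix.cons_val_fin_one, Matrix.of_apply, Fin.succ_zero_eq_one,
    Finset.univ_unique, Finset.sum_singleton]
  norm_num [Fin.ext_iff, Fin.val_succ]

lemma rankMM : MM.rank = 4 := by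
  refine le_antisymm ?_ ?_
  · calc MM.rank = (CC * RRf).rank := by rw [hfact]
      _ ≤ CC.rank := Matrix.rank_mul_le_left CC RRf
      _ ≤ Fintype.card (Fin 4) := Matrix.rank_le_card_width CC
      _ = 4 := Fintype.card_fin 4
  · have hu : IsUnit DD := ⟨⟨DD, DDi, hDD, mul_eq_one_comm.mp hDD⟩, rfl⟩
    calc (4 : ℕ) = Fintype.card (Fin 4) := (Fintype.card_fin 4).symm
      _ = DD.rank := (Matrix.rank_of_isUnit DD hu).symm
      _ = (P0 * MM * Q0).rank := by rw [hsub]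
      _ ≤ (P0 * MM).rank := Matrix.rank_mul_le_left (P0 * MM) Q0
      _ ≤ MM.rank := Matrix.rank_mul_le_right P0 MM

theorem gammaWW_minimal :
    (gammaWW + sympForm4 * gammaWW⁻¹ * sympForm4).rank = 4 ∧
    LinearMap.range (gammaWW + sympForm4 * gammaWW⁻¹ * sympForm4).mulVecLin ⊓
      LinearMap.range (gammaWW + sympFormPT4 * gammaWW⁻¹ * sympFormPT4).mulVecLin = ⊥ := by
  have hgi : gammaWW⁻¹ = giM := Matrix.inv_eq_right_inv hinv
  rw [hgi, hMM, hNN]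
  constructor
  · exact rankMM
  · rw [eq_bot_iff]
    rintro x ⟨hx1, hx2⟩
    obtain ⟨u, hu⟩ := hx1
    obtain ⟨v, hv⟩ := hx2
    simp only [Matrix.mulVecLin_apply] at hu hv
    have hP : PP.mulVec x = 0 := by
      rw [← hu, Matrix.mulVec_mulVec, hPM, Matrix.zero_mulVec]
    have hQ : QQ.mulVec x = 0 := by
      rw [← hv, Matrix.mulVec_mulVec, hQN, Matrix.zero_mulVec]
    have : x = 0 := by
      have h1 : (1 : Matrix (Fin 8) (Fin 8) ℝ).mulVec x = x := Matrix.one_mulVec x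
      rw [← hRPQ, ← Matrix.mulVec_mulVec, Matrix.add_mulVec, hP, hQ, add_zero,
        Matrix.mulVec_zero] at h1
      exact h1.symm
    simp [this]
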